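/- arXiv:1311.1174 — 2 statements merged into one kernel-verified Lean document; each statement's English description precedes it below -/
import Mathlib

section
/- Let (A₀,*) be a unitary ring with involution, A = M₂(A₀), J = [[0,1],[-1,0]] ∈ A, and define a new involution on A by a~ = J a* J⁻¹. Then the groups SL_*^+(2,A) and SL_~^-(2,A) are isomorphic; explicitly, conjugation by P = [[0,J],[1,0]] ∈ M₂(A) together with U = diag(J,J) realizes the isomorphism, since P J₊ P* = J₋ U and T~ U = U T* for all T ∈ M₂(A). -/
open Matrix

variable {A₀ : Type} [Ring A₀]

/-- The involution `*` on `A := M₂(A₀)` induced entrywise-transposed by `σ` on `A₀`. -/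
def starA (σ : A₀ → A₀) (a : Matrix (Fin 2) (Fin 2) A₀) : Matrix (Fin 2) (Fin 2) A₀ :=
  (a.map σ)ᵀ

/-- `J = [[0,1],[-1,0]] ∈ A`. -/
def Jmat : Matrix (Fin 2) (Fin 2) A₀ := !![0, 1; -1, 0]

/-- The new involution `a~ = J a* J⁻¹` on `A` (note `J⁻¹ = -J`). -/
def tildeA (σ : A₀ → A₀) (a : Matrix (Fin 2) (Fin 2) A₀) : Matrix (Fin 2) (Fin 2) A₀ :=
  Jmat * starA σ a * (-Jmat)

/-- The extension of an involution `τ` on `A` to `M₂(A)`: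
`[[a,b],[c,d]] ↦ [[τa,τc],[τb,τd]]`. -/
def invM₂ {A : Type} (τ : A → A) (T : Matrix (Fin 2) (Fin 2) A) : Matrix (Fin 2) (Fin 2) A :=
  (T.map τ)ᵀ

/- ### Auxiliary lemmas -/

lemma JJ : (Jmat : Matrix (Fin 2) (Fin 2) A₀) * Jmat = -1 := by
  ext i j
  fin_cases i <;> fin_cases j <;>
    simp [Jmat, Matrix.mul_apply, Fin.sum_univ_two, Matrix.one_apply]

lemma negJJ : (-Jmat : Matrix (Fin 2) (Fin 2) A₀) * Jmat = 1 := by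
  rw [neg_mul, JJ, neg_neg]

lemma JnegJ : (Jmat : Matrix (Fin 2) (Fin 2) A₀) * (-Jmat) = 1 := by
  rw [mul_neg, JJ, neg_neg]

lemma tilde_mul_J (σ : A₀ → A₀) (a : Matrix (Fin 2) (Fin 2) A₀) :
    tildeA σ a * Jmat = Jmat * starA σ a := by
  rw [tildeA, mul_assoc, negJJ, mul_one]

section Sigma

variable {σ : A₀ → A₀}

lemma sigma_zero (hadd : ∀ x y : A₀, σ (x + y) = σ x + σ y) : σ 0 = 0 := by
  have h := hadd 0 0
  simp only [add_zero] at h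
  exact left_eq_add.mp h

lemma sigma_neg (hadd : ∀ x y : A₀, σ (x + y) = σ x + σ y) (x : A₀) :
    σ (-x) = -σ x := by
  have h := hadd (-x) x
  rw [neg_add_cancel, sigma_zero hadd] at h
  exact eq_neg_of_add_eq_zero_left h.symm

lemma starA_zero (hadd : ∀ x y : A₀, σ (x + y) = σ x + σ y) :
    starA σ (0 : Matrix (Fin 2) (Fin 2) A₀) = 0 := by
  ext i j; simp [starA, sigma_zero hadd]

lemma starA_one (hadd : ∀ x y : A₀, σ (x + y) = σ x + σ y) (hone : σ 1 = 1) :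
    starA σ (1 : Matrix (Fin 2) (Fin 2) A₀) = 1 := by
  ext i j
  fin_cases i <;> fin_cases j <;>
    simp [starA, Matrix.one_apply, hone, sigma_zero hadd]

lemma starA_J (hadd : ∀ x y : A₀, σ (x + y) = σ x + σ y) (hone : σ 1 = 1) :
    starA σ (Jmat : Matrix (Fin 2) (Fin 2) A₀) = -Jmat := by
  ext i j
  fin_cases i <;> fin_cases j <;>
    simp [starA, Jmat, hone, sigma_zero hadd, sigma_neg hadd]

lemma starA_add (hadd : ∀ x y : A₀, σ (x + y) = σ x + σ y)
    (a b : Matrix (Fin 2) (Fin 2) A₀) :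
    starA σ (a + b) = starA σ a + starA σ b := by
  ext i j; simp [starA, hadd]

lemma starA_mul (hadd : ∀ x y : A₀, σ (x + y) = σ x + σ y)
    (hmul : ∀ x y : A₀, σ (x * y) = σ y * σ x)
    (a b : Matrix (Fin 2) (Fin 2) A₀) :
    starA σ (a * b) = starA σ b * starA σ a := by
  ext i j
  simp [starA, Matrix.mul_apply, Fin.sum_univ_two, hadd, hmul]

end Sigma

lemma invM₂_mul {A : Type} [Ring A] (τ : A → A)
    (h1 : ∀ x y : A, τ (x + y) = τ x + τ y)
    (h2 : ∀ x y : A, τ (x * y) = τ y * τ x)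
    (X Y : Matrix (Fin 2) (Fin 2) A) :
    invM₂ τ (X * Y) = invM₂ τ Y * invM₂ τ X := by
  ext i j
  simp [invM₂, Matrix.mul_apply, Fin.sum_univ_two, h1, h2]

lemma invM₂_one {A : Type} [Ring A] (τ : A → A) (h0 : τ 0 = 0) (h1 : τ 1 = 1) :
    invM₂ τ (1 : Matrix (Fin 2) (Fin 2) A) = 1 := by
  ext i j
  fin_cases i <;> fin_cases j <;> simp [invM₂, Matrix.one_apply, h0, h1]

lemma conj_cancel {A : Type} [Ring A] {p pi r w : A} (hp : pi * p = 1) (hr : r * w = 1)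
    {x y : A} (h : p * x * r = p * y * r) : x = y := by
  have e : ∀ z : A, pi * (p * z * r) * w = z := by
    intro z
    calc pi * (p * z * r) * w = pi * p * (z * (r * w)) := by
          simp only [mul_assoc]
      _ = z := by rw [hp, hr, one_mul, mul_one]
  rw [← e x, h, e y]

/-- `SL_*^+(2,A)` and `SL_~^-(2,A)` are isomorphic, the isomorphism being
realized by conjugation by `P = [[0,J],[1,0]]` (with inverse `[[0,1],[-J,0]]`), thanks to
the identities `T~ U = U T*` (for `U = diag(J,J)`) and `P J₊ P* = J₋ U`.  Since
conjugation by an invertible matrix is multiplicative and bijective, the stated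
equivalence of membership conditions realizes the group isomorphism. -/
theorem stmt1 (σ : A₀ → A₀)
    (hadd : ∀ x y : A₀, σ (x + y) = σ x + σ y)
    (hmul : ∀ x y : A₀, σ (x * y) = σ y * σ x)
    (hinv : ∀ x : A₀, σ (σ x) = x)
    (hone : σ 1 = 1) :
    letI A := Matrix (Fin 2) (Fin 2) A₀
    letI P : Matrix (Fin 2) (Fin 2) A := !![0, Jmat; 1, 0]
    letI Pinv : Matrix (Fin 2) (Fin 2) A := !![0, 1; -Jmat, 0]
    letI U : Matrix (Fin 2) (Fin 2) A := !![Jmat, 0; 0, Jmat]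
    letI Jplus : Matrix (Fin 2) (Fin 2) A := !![0, 1; 1, 0]
    letI Jminus : Matrix (Fin 2) (Fin 2) A := !![0, 1; -1, 0]
    P * Pinv = 1 ∧ Pinv * P = 1 ∧
    (∀ T : Matrix (Fin 2) (Fin 2) A, invM₂ (tildeA σ) T * U = U * invM₂ (starA σ) T) ∧
    P * Jplus * invM₂ (starA σ) P = Jminus * U ∧
    (∀ T : Matrix (Fin 2) (Fin 2) A,
      T * Jplus * invM₂ (starA σ) T = Jplus ↔
        (P * T * Pinv) * Jminus * invM₂ (tildeA σ) (P * T * Pinv) = Jminus) := by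
  -- names for the matrices
  set P : Matrix (Fin 2) (Fin 2) (Matrix (Fin 2) (Fin 2) A₀) := !![0, Jmat; 1, 0] with hP
  set Pinv : Matrix (Fin 2) (Fin 2) (Matrix (Fin 2) (Fin 2) A₀) := !![0, 1; -Jmat, 0] with hPinv
  set U : Matrix (Fin 2) (Fin 2) (Matrix (Fin 2) (Fin 2) A₀) := !![Jmat, 0; 0, Jmat] with hU
  set Jplus : Matrix (Fin 2) (Fin 2) (Matrix (Fin 2) (Fin 2) A₀) := !![0, 1; 1, 0] with hJp
  set Jminus : Matrix (Fin 2) (Fin 2) (Matrix (Fin 2) (Fin 2) A₀) := !![0, 1; -1, 0] with hJm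
  have h1 : P * Pinv = 1 := by
    refine Matrix.ext fun i j => ?_
    fin_cases i <;> fin_cases j <;>
      simp [hP, hPinv, Matrix.mul_apply, Fin.sum_univ_two, Matrix.one_apply, JnegJ, JJ]
  have h2 : Pinv * P = 1 := by
    refine Matrix.ext fun i j => ?_
    fin_cases i <;> fin_cases j <;>
      simp [hP, hPinv, Matrix.mul_apply, Fin.sum_univ_two, Matrix.one_apply, negJJ, JJ]
  have h3 : ∀ T : Matrix (Fin 2) (Fin 2) (Matrix (Fin 2) (Fin 2) A₀),
      invM₂ (tildeA σ) T * U = U * invM₂ (starA σ) T := by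
    intro T
    refine Matrix.ext fun i j => ?_
    fin_cases i <;> fin_cases j <;>
      simp [hU, invM₂, Matrix.mul_apply, Fin.sum_univ_two, tilde_mul_J]
  have h4 : P * Jplus * invM₂ (starA σ) P = Jminus * U := by
    refine Matrix.ext fun i j => ?_
    fin_cases i <;> fin_cases j <;>
      simp [hP, hU, hJp, hJm, invM₂, Matrix.mul_apply, Fin.sum_univ_two,
        starA_zero hadd, starA_one hadd hone, starA_J hadd hone, neg_one_mul]
  -- abbreviation for the extended star
  have hsmul : ∀ X Y : Matrix (Fin 2) (Fin 2) (Matrix (Fin 2) (Fin 2) A₀),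
      invM₂ (starA σ) (X * Y) = invM₂ (starA σ) Y * invM₂ (starA σ) X :=
    invM₂_mul _ (starA_add hadd) (starA_mul hadd hmul)
  have hsone : invM₂ (starA σ) (1 : Matrix (Fin 2) (Fin 2) (Matrix (Fin 2) (Fin 2) A₀)) = 1 :=
    invM₂_one _ (starA_zero hadd) (starA_one hadd hone)
  have hQQi : invM₂ (starA σ) P * invM₂ (starA σ) Pinv = 1 := by
    rw [← hsmul, h2, hsone]
  have hQiQ : invM₂ (starA σ) Pinv * invM₂ (starA σ) P = 1 := by
    rw [← hsmul, h1, hsone]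
  have hUU : U * (-U) = (1 : Matrix (Fin 2) (Fin 2) (Matrix (Fin 2) (Fin 2) A₀)) := by
    refine Matrix.ext fun i j => ?_
    fin_cases i <;> fin_cases j <;>
      simp [hU, Matrix.mul_apply, Fin.sum_univ_two, Matrix.one_apply, JnegJ, JJ]
  have hnUU : (-U) * U = (1 : Matrix (Fin 2) (Fin 2) (Matrix (Fin 2) (Fin 2) A₀)) := by
    refine Matrix.ext fun i j => ?_
    fin_cases i <;> fin_cases j <;>
      simp [hU, Matrix.mul_apply, Fin.sum_univ_two, Matrix.one_apply, negJJ, JJ]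
  have htilde : ∀ X : Matrix (Fin 2) (Fin 2) (Matrix (Fin 2) (Fin 2) A₀),
      invM₂ (tildeA σ) X = U * invM₂ (starA σ) X * (-U) := by
    intro X
    calc invM₂ (tildeA σ) X = invM₂ (tildeA σ) X * (U * (-U)) := by rw [hUU, mul_one]
      _ = (invM₂ (tildeA σ) X * U) * (-U) := by rw [mul_assoc]
      _ = U * invM₂ (starA σ) X * (-U) := by rw [h3]
  have hPJQ : P * Jplus * (invM₂ (starA σ) P * (-U)) = Jminus := by
    calc P * Jplus * (invM₂ (starA σ) P * (-U))
        = (P * Jplus * invM₂ (starA σ) P) * (-U) := by simp only [mul_assoc]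
      _ = Jminus * (U * (-U)) := by rw [h4, mul_assoc]
      _ = Jminus := by rw [hUU, mul_one]
  have middle : ∀ T : Matrix (Fin 2) (Fin 2) (Matrix (Fin 2) (Fin 2) A₀),
      (P * T * Pinv) * Jminus * invM₂ (tildeA σ) (P * T * Pinv)
        = P * (T * Jplus * invM₂ (starA σ) T) * (invM₂ (starA σ) P * (-U)) := by
    intro T
    rw [htilde, hsmul, hsmul]
    calc (P * T * Pinv) * Jminus *
          (U * (invM₂ (starA σ) Pinv * (invM₂ (starA σ) T * invM₂ (starA σ) P)) * (-U))
        = P * T * (Pinv * ((Jminus * U) * invM₂ (starA σ) Pinv)) *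
            (invM₂ (starA σ) T * (invM₂ (starA σ) P * (-U))) := by
          simp only [mul_assoc]
      _ = P * T * (Pinv * ((P * Jplus * invM₂ (starA σ) P) * invM₂ (starA σ) Pinv)) *
            (invM₂ (starA σ) T * (invM₂ (starA σ) P * (-U))) := by rw [h4]
      _ = P * (T * ((Pinv * P) * (Jplus * ((invM₂ (starA σ) P * invM₂ (starA σ) Pinv) *
            (invM₂ (starA σ) T * (invM₂ (starA σ) P * (-U))))))) := by
          simp only [mul_assoc]
      _ = P * (T * (Jplus * (invM₂ (starA σ) T * (invM₂ (starA σ) P * (-U))))) := by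
          rw [h2, hQQi, one_mul, one_mul]
      _ = P * (T * Jplus * invM₂ (starA σ) T) * (invM₂ (starA σ) P * (-U)) := by
          simp only [mul_assoc]
  refine ⟨h1, h2, h3, h4, ?_⟩
  intro T
  constructor
  · intro hT
    rw [middle T, hT, hPJQ]
  · intro hT
    have heq : P * (T * Jplus * invM₂ (starA σ) T) * (invM₂ (starA σ) P * (-U))
        = P * Jplus * (invM₂ (starA σ) P * (-U)) := by
      rw [← middle T, hT, hPJQ]
    have hr : (invM₂ (starA σ) P * (-U)) * (U * invM₂ (starA σ) Pinv) = 1 := by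
      calc (invM₂ (starA σ) P * (-U)) * (U * invM₂ (starA σ) Pinv)
          = invM₂ (starA σ) P * (((-U) * U) * invM₂ (starA σ) Pinv) := by
            simp only [mul_assoc]
        _ = 1 := by rw [hnUU, one_mul, hQQi]
    exact conj_cancel h2 hr heq
end

section
/- The split orthogonal group O_q(2n,2n) (the isometry group of a non-degenerate split symmetric bilinear form of rank 4n over F_q) is isomorphic to SL_~^-(2, M_{2n}(F_q)), where the involution ~ on M_{2n}(F_q) is given by a~ = J_{2n} aᵗ J_{2n}⁻¹ with J_{2n} = [[0,I_n],[-I_n,0]]. -/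
open Matrix

/-- `J_{2n} = [[0,Iₙ],[-Iₙ,0]] ∈ M_{2n}(F)`. -/
def Jn (F : Type) [Field F] (n : ℕ) : Matrix (Fin n ⊕ Fin n) (Fin n ⊕ Fin n) F :=
  fromBlocks 0 1 (-1) 0

/-- The involution `a~ = J_{2n} aᵗ J_{2n}⁻¹` on `M_{2n}(F)`. -/
noncomputable def tilde {F : Type} [Field F] {n : ℕ}
    (a : Matrix (Fin n ⊕ Fin n) (Fin n ⊕ Fin n) F) :
    Matrix (Fin n ⊕ Fin n) (Fin n ⊕ Fin n) F :=
  Jn F n * aᵀ * (Jn F n)⁻¹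

section Aux

variable {F : Type} [Field F] {n : ℕ}

lemma Jn_sq : Jn F n * Jn F n = -1 := by
  simp [Jn, fromBlocks_multiply, ← fromBlocks_one]
  rw [fromBlocks_neg]; norm_num

lemma Jn_inv : (Jn F n)⁻¹ = -(Jn F n) := by
  apply inv_eq_right_inv
  rw [mul_neg, Jn_sq, neg_neg]

/-- blocks of the conjugating matrix -/
def bE (F : Type) [Field F] (n : ℕ) : Matrix (Fin n ⊕ Fin n) (Fin n ⊕ Fin n) F :=
  fromBlocks 1 0 0 0
def bF (F : Type) [Field F] (n : ℕ) : Matrix (Fin n ⊕ Fin n) (Fin n ⊕ Fin n) F :=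
  fromBlocks 0 0 0 1
def bC (F : Type) [Field F] (n : ℕ) : Matrix (Fin n ⊕ Fin n) (Fin n ⊕ Fin n) F :=
  fromBlocks 0 (-1) 0 0
def bD (F : Type) [Field F] (n : ℕ) : Matrix (Fin n ⊕ Fin n) (Fin n ⊕ Fin n) F :=
  fromBlocks 0 0 1 0

def Pm (F : Type) [Field F] (n : ℕ) :
    Matrix (Fin 2) (Fin 2) (Matrix (Fin n ⊕ Fin n) (Fin n ⊕ Fin n) F) :=
  !![bE F n, bF F n; bC F n, bD F n]
def Pmi (F : Type) [Field F] (n : ℕ) :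
    Matrix (Fin 2) (Fin 2) (Matrix (Fin n ⊕ Fin n) (Fin n ⊕ Fin n) F) :=
  !![bE F n, -(bD F n); bF F n, -(bC F n)]
def Dm (F : Type) [Field F] (n : ℕ) :
    Matrix (Fin 2) (Fin 2) (Matrix (Fin n ⊕ Fin n) (Fin n ⊕ Fin n) F) :=
  !![Jn F n, 0; 0, Jn F n]

lemma PPmi : Pm F n * Pmi F n = 1 := by
  refine Matrix.ext fun i j => ?_
  fin_cases i <;> fin_cases j <;>
    simp [Pm, Pmi, Matrix.mul_apply, Fin.sum_univ_two, Matrix.one_apply,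
      bE, bF, bC, bD, fromBlocks_multiply, fromBlocks_add, fromBlocks_neg,
      ← fromBlocks_one, ← fromBlocks_zero]

lemma PmiP : Pmi F n * Pm F n = 1 := by
  refine Matrix.ext fun i j => ?_
  fin_cases i <;> fin_cases j <;>
    simp [Pm, Pmi, Matrix.mul_apply, Fin.sum_univ_two, Matrix.one_apply,
      bE, bF, bC, bD, fromBlocks_multiply, fromBlocks_add, fromBlocks_neg,
      ← fromBlocks_one, ← fromBlocks_zero]

lemma invM2_mul (X Y : Matrix (Fin 2) (Fin 2) (Matrix (Fin n ⊕ Fin n) (Fin n ⊕ Fin n) F)) :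
    invM₂ Matrix.transpose (X * Y) =
      invM₂ Matrix.transpose Y * invM₂ Matrix.transpose X := by
  refine Matrix.ext fun i j => ?_
  simp [invM₂, Matrix.mul_apply, Fin.sum_univ_two, Matrix.transpose_add, Matrix.transpose_mul]

lemma invM2_one :
    invM₂ Matrix.transpose
      (1 : Matrix (Fin 2) (Fin 2) (Matrix (Fin n ⊕ Fin n) (Fin n ⊕ Fin n) F)) = 1 := by
  refine Matrix.ext fun i j => ?_
  fin_cases i <;> fin_cases j <;> simp [invM₂, Matrix.one_apply]

lemma DmDm : Dm F n * Dm F n = -1 := by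
  refine Matrix.ext fun i j => ?_
  fin_cases i <;> fin_cases j <;>
    simp [Dm, Matrix.mul_apply, Fin.sum_univ_two, Jn_sq, Matrix.one_apply]

lemma DmnegDm : Dm F n * (-(Dm F n)) = 1 := by
  rw [mul_neg, DmDm, neg_neg]

lemma negDmDm : (-(Dm F n)) * Dm F n = 1 := by
  rw [neg_mul, DmDm, neg_neg]

lemma invM2_tilde (S : Matrix (Fin 2) (Fin 2) (Matrix (Fin n ⊕ Fin n) (Fin n ⊕ Fin n) F)) :
    invM₂ tilde S = Dm F n * invM₂ Matrix.transpose S * (-(Dm F n)) := by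
  refine Matrix.ext fun i j => ?_
  fin_cases i <;> fin_cases j <;>
    simp [invM₂, tilde, Jn_inv, Dm, Matrix.mul_apply, Matrix.vecMul, dotProduct,
      Fin.sum_univ_two, mul_neg, neg_mul, mul_assoc]

lemma keyP : Pm F n * !![0, 1; 1, 0] * invM₂ Matrix.transpose (Pm F n)
    = (!![0, 1; -1, 0] : Matrix (Fin 2) (Fin 2) (Matrix (Fin n ⊕ Fin n) (Fin n ⊕ Fin n) F))
        * Dm F n := by
  refine Matrix.ext fun i j => ?_
  fin_cases i <;> fin_cases j <;>
    simp [Pm, Dm, invM₂, Matrix.mul_apply, Fin.sum_univ_two,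
      bE, bF, bC, bD, Jn, fromBlocks_multiply, fromBlocks_transpose, fromBlocks_add,
      fromBlocks_neg, ← fromBlocks_one, ← fromBlocks_zero]

end Aux

/-- The split orthogonal group `O_q(2n,2n) = SL_⋄^+(2, M_{2n}(F_q))` is
isomorphic to `SL_~^-(2, M_{2n}(F_q))`, where `a~ = J_{2n} aᵗ J_{2n}⁻¹`.  The
isomorphism is realized by conjugation by an invertible matrix `P`, which is
automatically a multiplicative bijection. -/
theorem stmt3 (F : Type) [Field F] [Fintype F] (n : ℕ) :
    letI A := Matrix (Fin n ⊕ Fin n) (Fin n ⊕ Fin n) F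
    letI Jplus : Matrix (Fin 2) (Fin 2) A := !![0, 1; 1, 0]
    letI Jminus : Matrix (Fin 2) (Fin 2) A := !![0, 1; -1, 0]
    ∃ P Pinv : Matrix (Fin 2) (Fin 2) A,
      P * Pinv = 1 ∧ Pinv * P = 1 ∧
      ∀ T : Matrix (Fin 2) (Fin 2) A,
        T * Jplus * invM₂ Matrix.transpose T = Jplus ↔
          (P * T * Pinv) * Jminus * invM₂ tilde (P * T * Pinv) = Jminus := by
  set A := Matrix (Fin n ⊕ Fin n) (Fin n ⊕ Fin n) F with hA
  set Jplus : Matrix (Fin 2) (Fin 2) A := !![0, 1; 1, 0] with hJp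
  set Jminus : Matrix (Fin 2) (Fin 2) A := !![0, 1; -1, 0] with hJm
  set P := Pm F n with hP
  set Pinv := Pmi F n with hPi
  set D := Dm F n with hD
  have tcancel1 : invM₂ Matrix.transpose P * invM₂ Matrix.transpose Pinv = 1 := by
    rw [← invM2_mul, PmiP, invM2_one]
  have k0 : Pinv * (Jminus * (D * invM₂ Matrix.transpose Pinv)) = Jplus := by
    have h := keyP (F := F) (n := n)
    calc Pinv * (Jminus * (D * invM₂ Matrix.transpose Pinv))
        = Pinv * ((Jminus * D) * invM₂ Matrix.transpose Pinv) := by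
          simp only [mul_assoc]
      _ = Pinv * ((P * Jplus * invM₂ Matrix.transpose P) * invM₂ Matrix.transpose Pinv) := by
          rw [← h]
      _ = (Pinv * P) * (Jplus * (invM₂ Matrix.transpose P * invM₂ Matrix.transpose Pinv)) := by
          simp only [mul_assoc]
      _ = Jplus := by rw [PmiP, tcancel1, one_mul, mul_one]
  have k1 : ∀ X : Matrix (Fin 2) (Fin 2) A,
      Pinv * (Jminus * (D * (invM₂ Matrix.transpose Pinv * X))) = Jplus * X := by
    intro X
    calc Pinv * (Jminus * (D * (invM₂ Matrix.transpose Pinv * X)))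
        = Pinv * (Jminus * (D * invM₂ Matrix.transpose Pinv)) * X := by
          simp only [mul_assoc]
      _ = Jplus * X := by rw [k0]
  have k2 : P * (Jplus * (invM₂ Matrix.transpose P * -D)) = Jminus := by
    calc P * (Jplus * (invM₂ Matrix.transpose P * -D))
        = (P * Jplus * invM₂ Matrix.transpose P) * (-D) := by simp only [mul_assoc]
      _ = Jminus * (D * -D) := by rw [keyP]; simp only [mul_assoc]; rfl
      _ = Jminus := by rw [DmnegDm, mul_one]
  have key : ∀ T : Matrix (Fin 2) (Fin 2) A,
      (P * T * Pinv) * Jminus * invM₂ tilde (P * T * Pinv)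
        = P * (T * Jplus * invM₂ Matrix.transpose T) * (invM₂ Matrix.transpose P * -D) := by
    intro T
    rw [invM2_tilde, invM2_mul, invM2_mul]
    simp only [mul_assoc]
    rw [k1]
  have lconv : ∀ X : Matrix (Fin 2) (Fin 2) A,
      Pinv * (P * X * (invM₂ Matrix.transpose P * -D)) * (D * invM₂ Matrix.transpose Pinv)
        = X := by
    intro X
    calc Pinv * (P * X * (invM₂ Matrix.transpose P * -D)) * (D * invM₂ Matrix.transpose Pinv)
        = (Pinv * P) * (X * (invM₂ Matrix.transpose P * ((-D) * (D * invM₂ Matrix.transpose Pinv)))) := by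
          simp only [mul_assoc]
      _ = (Pinv * P) * (X * (invM₂ Matrix.transpose P * (((-D) * D) * invM₂ Matrix.transpose Pinv))) := by
          simp only [mul_assoc]
      _ = X := by
          rw [negDmDm, one_mul, tcancel1, PmiP, one_mul, mul_one]
  refine ⟨P, Pinv, PPmi, PmiP, fun T => ?_⟩
  constructor
  · intro h
    rw [key, h]
    simpa only [mul_assoc] using k2
  · intro h
    rw [key] at h
    have h3 := congrArg
      (fun Z => Pinv * Z * (D * invM₂ Matrix.transpose Pinv)) h
    rw [lconv] at h3
    rw [h3]
    calc Pinv * Jminus * (D * invM₂ Matrix.transpose Pinv)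
        = Pinv * (Jminus * (D * invM₂ Matrix.transpose Pinv)) := by simp only [mul_assoc]
      _ = Jplus := k0
end
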